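/- In the whole genome duplication - random loss model, the set of permutations obtainable from an identity permutation in at most p duplication-loss steps is stable for the pattern-involvement relation ≺: if σ of size n is obtainable from the identity of size n in at most p steps, and π of size k is a pattern of σ, then π is obtainable from the identity of size k in at most p steps. -/

import Mathlib

/-- `π` is a pattern of `σ` (written `π ≺ σ`). -/
def IsPattern {k n : ℕ} (π : Equiv.Perm (Fin k)) (σ : Equiv.Perm (Fin n)) : Prop :=
  ∃ f : Fin k ↪o Fin n, ∀ ℓ m : Fin k, π ℓ < π m → σ (f ℓ) < σ (f m)

/-- One step of the whole genome duplication - random loss model: `σ'` is obtained from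
`σ` by choosing a set of positions (the first `m` positions after reordering by `τ`) and
writing the subsequence of `σ` at these positions, in increasing order of positions,
followed by the subsequence of `σ` at the remaining positions, in increasing order of
positions.  Here `τ` sends the new position of an element to its old position. -/
def DLStep {n : ℕ} (σ σ' : Equiv.Perm (Fin n)) : Prop :=
  ∃ (m : ℕ) (τ : Equiv.Perm (Fin n)),
    (∀ i j : Fin n, (i : ℕ) < m → (j : ℕ) < m → i < j → τ i < τ j) ∧
    (∀ i j : Fin n, m ≤ (i : ℕ) → m ≤ (j : ℕ) → i < j → τ i < τ j) ∧
    ∀ i, σ' i = σ (τ i)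

/-- `σ` is obtainable from the identity permutation in at most `p` duplication-loss steps. -/
def ObtainableIn {n : ℕ} (p : ℕ) (σ : Equiv.Perm (Fin n)) : Prop :=
  ∃ (q : ℕ) (c : ℕ → Equiv.Perm (Fin n)), q ≤ p ∧ c 0 = 1 ∧ c q = σ ∧
    ∀ i, i < q → DLStep (c i) (c (i + 1))

/-- The relative-order pattern of an injective map `Fin k → Fin n`, as a permutation. -/
noncomputable def pattOf {k n : ℕ} (v : Fin k → Fin n) (hv : Function.Injective v) :
    Equiv.Perm (Fin k) := by
  classical
  have hcard : (Finset.univ.image v).card = k := by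
    rw [Finset.card_image_of_injective _ hv, Finset.card_univ, Fintype.card_fin]
  refine Equiv.ofBijective
    (fun ℓ => ((Finset.univ.image v).orderIsoOfFin hcard).symm
      ⟨v ℓ, Finset.mem_image_of_mem v (Finset.mem_univ ℓ)⟩) ?_
  refine Finite.injective_iff_bijective.mp ?_
  intro a b hab
  have := ((Finset.univ.image v).orderIsoOfFin hcard).symm.injective hab
  exact hv (congrArg Subtype.val this)

lemma pattOf_lt_iff {k n : ℕ} (v : Fin k → Fin n) (hv : Function.Injective v)
    (ℓ m : Fin k) : pattOf v hv ℓ < pattOf v hv m ↔ v ℓ < v m := by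
  classical
  show (_ : Equiv.Perm (Fin k)) ℓ < _ ↔ _
  simp only [pattOf, Equiv.ofBijective_apply]
  rw [← OrderIso.lt_iff_lt ((Finset.univ.image v).orderIsoOfFin
      (by rw [Finset.card_image_of_injective _ hv, Finset.card_univ, Fintype.card_fin])),
    OrderIso.apply_symm_apply, OrderIso.apply_symm_apply, Subtype.mk_lt_mk]

/-- A permutation of `Fin k` is determined by its relative order. -/
lemma perm_eq_of_lt_iff {k : ℕ} (α β : Equiv.Perm (Fin k))
    (h : ∀ ℓ m, α ℓ < α m ↔ β ℓ < β m) : α = β := by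
  have hsm : StrictMono (fun x => β (α.symm x)) := by
    intro a b hab
    exact (h _ _).mp (by simpa using hab)
  have hwf : WellFoundedLT (Fin k) := inferInstance
  have hid : (fun x => β (α.symm x)) = (id : Fin k → Fin k) := by
    refine (@StrictMono.range_inj (Fin k) (Fin k) _ _ hwf _ _ hsm
      (strictMono_id : StrictMono (id : Fin k → Fin k))).mp ?_
    rw [Set.range_id]
    exact Set.range_eq_univ.mpr (fun y => ⟨α (β.symm y), by simp⟩)
  ext x
  have := congrFun hid (α x)
  simp only [Equiv.symm_apply_apply, id_eq] at this
  exact congrArg Fin.val this.symm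

lemma pattOf_eq_of_perm {k n : ℕ} (v : Fin k → Fin n) (hv : Function.Injective v)
    (α : Equiv.Perm (Fin k)) (h : ∀ ℓ m, α ℓ < α m ↔ v ℓ < v m) :
    α = pattOf v hv :=
  perm_eq_of_lt_iff _ _ (fun ℓ m => (h ℓ m).trans (pattOf_lt_iff v hv ℓ m).symm)

/-- The order embedding enumerating the image of an injective map. -/
noncomputable def embOf {k n : ℕ} (v : Fin k → Fin n) (hv : Function.Injective v) :
    Fin k ↪o Fin n := by
  classical
  have hcard : (Finset.univ.image v).card = k := by
    rw [Finset.card_image_of_injective _ hv, Finset.card_univ, Fintype.card_fin]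
  exact (Finset.univ.image v).orderEmbOfFin hcard

lemma embOf_pattOf {k n : ℕ} (v : Fin k → Fin n) (hv : Function.Injective v)
    (ℓ : Fin k) : embOf v hv (pattOf v hv ℓ) = v ℓ := by
  classical
  simp only [embOf, pattOf, Equiv.ofBijective_apply]
  rw [← Finset.coe_orderIsoOfFin_apply, OrderIso.apply_symm_apply]

/-- A lower set in `Fin k`: membership iff index below the cardinality. -/
lemma mem_lower_iff {k : ℕ} (S : Finset (Fin k))
    (hS : ∀ a b : Fin k, a ≤ b → b ∈ S → a ∈ S) (ℓ : Fin k) :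
    ℓ ∈ S ↔ (ℓ : ℕ) < S.card := by
  constructor
  · intro hl
    have hsub : Finset.Iic ℓ ⊆ S := fun a ha => hS a ℓ (Finset.mem_Iic.mp ha) hl
    have := Finset.card_le_card hsub
    rw [Fin.card_Iic] at this
    omega
  · intro hl
    by_contra hns
    have hsub : S ⊆ Finset.Iio ℓ := by
      intro a ha
      rw [Finset.mem_Iio]
      by_contra hla
      exact hns (hS ℓ a (le_of_not_gt hla) ha)
    have := Finset.card_le_card hsub
    rw [Fin.card_Iio] at this
    omega

lemma obtainable_mono {n : ℕ} {p p' : ℕ} (h : p ≤ p') (σ : Equiv.Perm (Fin n)) :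
    ObtainableIn p σ → ObtainableIn p' σ := by
  rintro ⟨q, c, hq, h0, hq', hs⟩
  exact ⟨q, c, hq.trans h, h0, hq', hs⟩

lemma obtainable_one {n : ℕ} : ObtainableIn 0 (1 : Equiv.Perm (Fin n)) :=
  ⟨0, fun _ => 1, le_refl _, rfl, rfl, fun i hi => absurd hi (Nat.not_lt_zero i)⟩

lemma obtainable_step {n : ℕ} {q : ℕ} {d d' : Equiv.Perm (Fin n)}
    (h : ObtainableIn q d) (hstep : DLStep d d') : ObtainableIn (q + 1) d' := by
  classical
  obtain ⟨q0, c, hq0, h0, hcq, hs⟩ := h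
  refine ⟨q0 + 1, fun i => if i ≤ q0 then c i else d', by omega, by simp [h0], by
    simp, ?_⟩
  intro i hi
  rcases Nat.lt_or_ge i q0 with hlt | hge
  · have h1 : i ≤ q0 := hlt.le
    have h2 : i + 1 ≤ q0 := hlt
    simpa [h1, h2] using hs i hlt
  · have : i = q0 := by omega
    subst this
    simpa [hcq] using hstep

/-- Key lemma: the pattern of `c q` at any set of positions is obtainable in `q` steps. -/
lemma key {n : ℕ} (q : ℕ) : ∀ (c : ℕ → Equiv.Perm (Fin n)), c 0 = 1 →
    (∀ i, i < q → DLStep (c i) (c (i + 1))) →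
    ∀ {k : ℕ} (g : Fin k ↪o Fin n),
    ObtainableIn q (pattOf (fun ℓ => c q (g ℓ)) ((c q).injective.comp g.injective)) := by
  induction q with
  | zero =>
    intro c h0 _ k g
    have : (1 : Equiv.Perm (Fin k)) =
        pattOf (fun ℓ => c 0 (g ℓ)) ((c 0).injective.comp g.injective) := by
      refine pattOf_eq_of_perm _ _ _ (fun ℓ m => ?_)
      simp [h0, g.lt_iff_lt]
    exact this ▸ obtainable_one
  | succ q ih =>
    intro c h0 hs k g
    obtain ⟨m, τ, hτ1, hτ2, hτ⟩ := hs q (Nat.lt_succ_self q)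
    -- v : positions in `c q` coordinates
    set v : Fin k → Fin n := fun ℓ => τ (g ℓ) with hv
    have hvinj : Function.Injective v := τ.injective.comp g.injective
    set g' := embOf v hvinj with hg'
    set r := pattOf v hvinj with hr
    have hIH := ih c h0 (fun i hi => hs i (hi.trans (Nat.lt_succ_self q))) g'
    set d := pattOf (fun ℓ => c q (g' ℓ)) ((c q).injective.comp g'.injective) with hd
    refine obtainable_step hIH ?_
    -- the new pattern equals d ∘ r
    have hcomp : ∀ ℓ, pattOf (fun ℓ => c (q+1) (g ℓ)) ((c (q+1)).injective.comp g.injective) ℓ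
        = d (r ℓ) := by
      have : (Equiv.trans r d) =
          pattOf (fun ℓ => c (q+1) (g ℓ)) ((c (q+1)).injective.comp g.injective) := by
        refine pattOf_eq_of_perm _ _ _ (fun ℓ m => ?_)
        have h1 : ∀ ℓ, c (q+1) (g ℓ) = c q (g' (r ℓ)) := by
          intro ℓ
          rw [hτ (g ℓ)]
          congr 1
          exact (embOf_pattOf v hvinj ℓ).symm
        simp only [Equiv.trans_apply, h1]
        exact pattOf_lt_iff _ _ (r ℓ) (r m)
      intro ℓ
      rw [← this]; rfl
    -- show DLStep d (d ∘ r)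
    classical
    set S : Finset (Fin k) := Finset.univ.filter (fun ℓ => (g ℓ : ℕ) < m) with hS
    have hmemS : ∀ ℓ : Fin k, ℓ ∈ S ↔ (g ℓ : ℕ) < m := by
      intro ℓ; simp [hS]
    have hSlow : ∀ a b : Fin k, a ≤ b → b ∈ S → a ∈ S := by
      intro a b hab hb
      rw [hmemS] at hb ⊢
      have : (g a : ℕ) ≤ (g b : ℕ) := g.monotone hab
      omega
    have hmem : ∀ ℓ : Fin k, (ℓ : ℕ) < S.card ↔ (g ℓ : ℕ) < m := by
      intro ℓ
      rw [← mem_lower_iff S hSlow ℓ, hmemS]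
    refine ⟨S.card, r, ?_, ?_, ?_⟩
    · intro i j hi hj hij
      rw [hmem] at hi hj
      rw [hr, pattOf_lt_iff]
      exact hτ1 (g i) (g j) hi hj (g.lt_iff_lt.mpr hij)
    · intro i j hi hj hij
      rw [← not_lt, hmem, not_lt] at hi hj
      rw [hr, pattOf_lt_iff]
      exact hτ2 (g i) (g j) hi hj (g.lt_iff_lt.mpr hij)
    · exact hcomp

/-- The class of permutations obtainable in at most `p` steps in the whole genome
duplication - random loss model is stable for the pattern-involvement relation. -/
theorem obtainable_stable_for_pattern {n : ℕ} (p : ℕ) (σ : Equiv.Perm (Fin n))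
    (h : ObtainableIn p σ) {k : ℕ} (π : Equiv.Perm (Fin k)) (hπ : IsPattern π σ) :
    ObtainableIn p π := by
  obtain ⟨q, c, hq, h0, hcq, hs⟩ := h
  obtain ⟨f, hf⟩ := hπ
  have hkey := key q c h0 hs f
  rw [hcq] at hkey
  have hπeq : π = pattOf (fun ℓ => σ (f ℓ)) (σ.injective.comp f.injective) := by
    refine pattOf_eq_of_perm _ _ _ (fun ℓ m => ?_)
    constructor
    · exact hf ℓ m
    · intro hlt
      rcases lt_trichotomy (π ℓ) (π m) with h' | h' | h'
      · exact h'
      · obtain rfl := π.injective h'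
        exact absurd hlt (lt_irrefl _)
      · exact absurd (hf m ℓ h') (not_lt.mpr hlt.le)
  rw [hπeq]
  exact obtainable_mono hq _ hkey
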